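/- Let d ≥ 1, let ε ≥ 0, and let a, b ∈ ℝ^d with side lengths s_i = b_i − a_i > 0 for every coordinate i satisfying the bounded aspect-ratio condition max_i s_i ≤ (1 + ε) · min_i s_i. Let c = (a + b)/2 be the midpoint and r = dist(a, b)/2 half the Euclidean diagonal of the box [a,b] = ∏_i [a_i, b_i]. Then the box [a,b] is contained in the closed Euclidean ball B(c, r), and the Lebesgue measures satisfy vol(B(c, r)) ≤ ((1 + ε) · √d / 2)^d · vol(B(0, 1)) · vol([a,b]), where B(0,1) is the closed unit ball of ℝ^d. -/

import Mathlib

open MeasureTheory Metric Finset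

theorem bounded_aspect_ratio_enclosing_ball (d : ℕ) (hd : 1 ≤ d) (ε : ℝ) (hε : 0 ≤ ε)
    (a b : EuclideanSpace ℝ (Fin d)) (hab : ∀ i, a i < b i)
    (haspect : ∀ i j, b i - a i ≤ (1 + ε) * (b j - a j))
    (c : EuclideanSpace ℝ (Fin d)) (hc : ∀ i, c i = (a i + b i) / 2)
    (r : ℝ) (hr : r = dist a b / 2) :
    {x : EuclideanSpace ℝ (Fin d) | ∀ i, x i ∈ Set.Icc (a i) (b i)} ⊆
        Metric.closedBall c r ∧
    MeasureTheory.volume (Metric.closedBall c r) ≤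
      ENNReal.ofReal (((1 + ε) * Real.sqrt d / 2) ^ d) *
        MeasureTheory.volume (Metric.closedBall (0 : EuclideanSpace ℝ (Fin d)) 1) *
        MeasureTheory.volume
          {x : EuclideanSpace ℝ (Fin d) | ∀ i, x i ∈ Set.Icc (a i) (b i)} := by
  set K := (1 + ε) * Real.sqrt d / 2 with hK
  have hr0 : 0 ≤ r := by rw [hr]; positivity
  have hsqrt4 : Real.sqrt 4 = 2 := by
    rw [show (4:ℝ) = 2 ^ 2 by norm_num, Real.sqrt_sq (by norm_num)]
  constructor
  · intro x hx
    simp only [Set.mem_setOf_eq] at hx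
    simp only [Metric.mem_closedBall]
    rw [hr, EuclideanSpace.dist_eq, EuclideanSpace.dist_eq]
    have hsum : ∑ i, dist (x i) (c i) ^ 2 ≤ ∑ i, (dist (a i) (b i) / 2) ^ 2 := by
      apply Finset.sum_le_sum
      intro i _
      have h1 := (hx i).1
      have h2 := (hx i).2
      have hci := hc i
      have habs : |x i - c i| ≤ (b i - a i) / 2 := by
        rw [abs_le]; constructor <;> linarith
      have hd2 : dist (a i) (b i) = b i - a i := by
        rw [Real.dist_eq, abs_sub_comm, abs_of_pos (sub_pos.2 (hab i))]
      rw [Real.dist_eq, hd2]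
      calc |x i - c i| ^ 2 ≤ ((b i - a i)/2) ^ 2 :=
            pow_le_pow_left₀ (abs_nonneg _) habs 2
        _ = _ := by ring
    have h4 : ∑ i, (dist (a i) (b i) / 2) ^ 2 = (∑ i, dist (a i) (b i) ^ 2) / 4 := by
      simp [div_pow, Finset.sum_div]; norm_num
    calc Real.sqrt (∑ i, dist (x i) (c i) ^ 2)
        ≤ Real.sqrt ((∑ i, dist (a i) (b i) ^ 2) / 4) := by
          apply Real.sqrt_le_sqrt; rw [← h4]; exact hsum
      _ = Real.sqrt (∑ i, dist (a i) (b i) ^ 2) / 2 := by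
          rw [Real.sqrt_div (by positivity) 4, hsqrt4]
      _ ≤ _ := le_refl _
  · -- volume bound
    have hs0 : ∀ i, (0:ℝ) ≤ b i - a i := fun i => le_of_lt (sub_pos.2 (hab i))
    have hrK : ∀ j, r ≤ K * (b j - a j) := by
      intro j
      rw [hr, EuclideanSpace.dist_eq]
      have h1 : ∑ i, dist (a i) (b i) ^ 2 ≤ ∑ _i : Fin d, ((1+ε)*(b j - a j)) ^ 2 := by
        apply Finset.sum_le_sum
        intro i _
        have hd2 : dist (a i) (b i) = b i - a i := by
          rw [Real.dist_eq, abs_sub_comm, abs_of_pos (sub_pos.2 (hab i))]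
        rw [hd2]
        exact pow_le_pow_left₀ (hs0 i) (haspect i j) 2
      have h2 : ∑ _i : Fin d, ((1+ε)*(b j - a j)) ^ 2 = (d:ℝ) * ((1+ε)*(b j - a j)) ^ 2 := by
        rw [Finset.sum_const, Finset.card_univ, Fintype.card_fin, nsmul_eq_mul]
      have h3 : Real.sqrt (∑ i, dist (a i) (b i) ^ 2)
          ≤ Real.sqrt d * ((1+ε)*(b j - a j)) := by
        calc Real.sqrt (∑ i, dist (a i) (b i) ^ 2)
            ≤ Real.sqrt ((d:ℝ) * ((1+ε)*(b j - a j)) ^ 2) := by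
              apply Real.sqrt_le_sqrt; rw [← h2]; exact h1
          _ = Real.sqrt d * ((1+ε)*(b j - a j)) := by
              rw [Real.sqrt_mul (Nat.cast_nonneg d), Real.sqrt_sq (mul_nonneg (by linarith) (hs0 j))]
      rw [hK]
      linarith
    have hbox : MeasureTheory.volume {x : EuclideanSpace ℝ (Fin d) | ∀ i, x i ∈ Set.Icc (a i) (b i)}
        = ∏ i, ENNReal.ofReal (b i - a i) := by
      have hmp := EuclideanSpace.volume_preserving_symm_measurableEquiv_toLp (Fin d)
      have hset : {x : EuclideanSpace ℝ (Fin d) | ∀ i, x i ∈ Set.Icc (a i) (b i)}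
          = (MeasurableEquiv.toLp 2 (Fin d → ℝ)).symm ⁻¹'
              (Set.univ.pi fun i => Set.Icc (a i) (b i)) := by
        ext x
        simp [Set.mem_pi, Pi.le_def, forall_and]
      rw [hset, hmp.measure_preimage
        (MeasurableSet.univ_pi fun i => measurableSet_Icc).nullMeasurableSet, volume_pi_pi]
      simp [Real.volume_Icc]
    have hball : MeasureTheory.volume (Metric.closedBall c r)
        = ENNReal.ofReal (r ^ d) *
            MeasureTheory.volume (Metric.closedBall (0 : EuclideanSpace ℝ (Fin d)) 1) := by
      have := MeasureTheory.Measure.addHaar_closedBall'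
        (μ := (volume : Measure (EuclideanSpace ℝ (Fin d)))) c hr0
      simpa [finrank_euclideanSpace_fin] using this
    rw [hball, hbox, mul_right_comm]
    apply mul_le_mul_left
    rw [← ENNReal.ofReal_prod_of_nonneg (fun i _ => hs0 i), ← ENNReal.ofReal_mul (by positivity)]
    apply ENNReal.ofReal_le_ofReal
    have hK0 : 0 ≤ K := by rw [hK]; positivity
    calc r ^ d = ∏ _i : Fin d, r := by
          rw [Finset.prod_const, Finset.card_univ, Fintype.card_fin]
      _ ≤ ∏ i : Fin d, K * (b i - a i) :=
          Finset.prod_le_prod (fun i _ => hr0) (fun i _ => hrK i)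
      _ = K ^ d * ∏ i, (b i - a i) := by
          rw [Finset.prod_mul_distrib, Finset.prod_const, Finset.card_univ, Fintype.card_fin]
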